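/- Let g be a probability mass function on the finite grid Θ_d = {ϑ_1,…,ϑ_d} ⊂ (0,∞) with g(ϑ_j) > 0 for all j, and define the d×d matrix V with entries V_{i,j} = ∑_{z∈ℕ} g(ϑ_i|z) g(ϑ_j|z) p_g(z) − g(ϑ_i) g(ϑ_j), where g(ϑ_i|z) = k(z|ϑ_i)g(ϑ_i)/p_g(z). Then the (d−1)×(d−1) leading principal submatrix of V is positive definite. -/

import Mathlib

set_option maxHeartbeats 1000000


/-- The Poisson kernel `k(y|θ) = e^{-θ} θ^y / y!`. -/
noncomputable def poissonK (θ : ℝ) (y : ℕ) : ℝ :=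
  Real.exp (-θ) * θ ^ y / (Nat.factorial y)

/-- The discrete Poisson mixture `p_g(z) = ∑_j k(z|ϑ_j) g_j`. -/
noncomputable def pf {d : ℕ} (ϑ : Fin d → ℝ) (g : Fin d → ℝ) (z : ℕ) : ℝ :=
  ∑ j, poissonK (ϑ j) z * g j

lemma poissonK_pos {θ : ℝ} (hθ : 0 < θ) (z : ℕ) : 0 < poissonK θ z := by
  unfold poissonK
  have : (0:ℝ) < (Nat.factorial z : ℝ) := by
    exact_mod_cast Nat.factorial_pos z
  positivity

lemma poissonK_summable (θ : ℝ) : Summable (poissonK θ) := by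
  have : (poissonK θ) = fun z : ℕ => Real.exp (-θ) * (θ ^ z / z.factorial) := by
    funext z; unfold poissonK; ring
  rw [this]
  exact (Real.summable_pow_div_factorial θ).mul_left _

lemma poissonK_tsum (θ : ℝ) : ∑' z, poissonK θ z = 1 := by
  have h : (poissonK θ) = fun z : ℕ => Real.exp (-θ) * (θ ^ z / z.factorial) := by
    funext z; unfold poissonK; ring
  rw [h, tsum_mul_left]
  have h2 : ∑' z : ℕ, θ ^ z / (z.factorial : ℝ) = Real.exp θ := by
    rw [Real.exp_eq_exp_ℝ, NormedSpace.exp_eq_tsum_div]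
  rw [h2, ← Real.exp_add]
  simp

lemma pf_pos {m : ℕ} (ϑ g : Fin (m + 1) → ℝ) (hpos : ∀ j, 0 < ϑ j)
    (hg : ∀ j, 0 < g j) (z : ℕ) : 0 < pf ϑ g z :=
  Finset.sum_pos (fun j _ => mul_pos (poissonK_pos (hpos j) z) (hg j)) Finset.univ_nonempty

lemma poissonK_mul_le_pf {m : ℕ} (ϑ g : Fin (m + 1) → ℝ) (hpos : ∀ j, 0 < ϑ j)
    (hg : ∀ j, 0 < g j) (j : Fin (m + 1)) (z : ℕ) :
    poissonK (ϑ j) z * g j ≤ pf ϑ g z :=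
  Finset.single_le_sum (f := fun j => poissonK (ϑ j) z * g j)
    (fun i _ => (mul_pos (poissonK_pos (hpos i) z) (hg i)).le) (Finset.mem_univ j)

lemma pf_summable {m : ℕ} (ϑ g : Fin (m + 1) → ℝ) : Summable (pf ϑ g) :=
  summable_sum fun j _ => (poissonK_summable (ϑ j)).mul_right (g j)

lemma pf_tsum {m : ℕ} (ϑ g : Fin (m + 1) → ℝ) (hg1 : ∑ j, g j = 1) :
    ∑' z, pf ϑ g z = 1 := by
  unfold pf
  rw [Summable.tsum_finsetSum fun j _ => (poissonK_summable (ϑ j)).mul_right (g j)]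
  calc ∑ j, ∑' z, poissonK (ϑ j) z * g j
      = ∑ j, (∑' z, poissonK (ϑ j) z) * g j := by
        exact Finset.sum_congr rfl fun j _ => tsum_mul_right
    _ = ∑ j, g j := by
        exact Finset.sum_congr rfl fun j _ => by rw [poissonK_tsum]; ring
    _ = 1 := hg1

/-- for a strictly positive pmf `g` on the grid `{ϑ_1,…,ϑ_{m+1}} ⊂ (0,∞)`,
the `(d−1)×(d−1)` leading principal submatrix of the posterior covariance matrix
`V_{i,j} = ∑_z g(ϑ_i|z) g(ϑ_j|z) p_g(z) − g(ϑ_i) g(ϑ_j)` is positive definite. -/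
theorem posterior_cov_posDef (m : ℕ) (ϑ : Fin (m + 1) → ℝ)
    (hpos : ∀ j, 0 < ϑ j) (hmono : StrictMono ϑ)
    (g : Fin (m + 1) → ℝ) (hg : ∀ j, 0 < g j) (hg1 : ∑ j, g j = 1) :
    Matrix.PosDef (Matrix.of fun i j : Fin m =>
      (∑' z : ℕ,
          (poissonK (ϑ i.castSucc) z * g i.castSucc / pf ϑ g z) *
            (poissonK (ϑ j.castSucc) z * g j.castSucc / pf ϑ g z) * pf ϑ g z)
        - g i.castSucc * g j.castSucc) := by
  have hp : ∀ z, 0 < pf ϑ g z := pf_pos ϑ g hpos hg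
  -- abbreviations
  set k : Fin (m + 1) → ℕ → ℝ := fun j z => poissonK (ϑ j) z with hk
  -- the summand in each matrix entry
  set t : Fin m → Fin m → ℕ → ℝ := fun i j z =>
    (k i.castSucc z * g i.castSucc / pf ϑ g z) *
      (k j.castSucc z * g j.castSucc / pf ϑ g z) * pf ϑ g z with ht
  have ht_eq : ∀ i j z, t i j z =
      (k i.castSucc z * g i.castSucc) * ((k j.castSucc z * g j.castSucc) / pf ϑ g z) := by
    intro i j z
    have := (hp z).ne'
    simp only [ht]
    field_simp
  have ht_nonneg : ∀ i j z, 0 ≤ t i j z := by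
    intro i j z
    rw [ht_eq]
    have h1 : 0 ≤ k i.castSucc z * g i.castSucc :=
      (mul_pos (poissonK_pos (hpos _) z) (hg _)).le
    have h2 : 0 ≤ k j.castSucc z * g j.castSucc :=
      (mul_pos (poissonK_pos (hpos _) z) (hg _)).le
    exact mul_nonneg h1 (div_nonneg h2 (hp z).le)
  have ht_summable : ∀ i j, Summable (t i j) := by
    intro i j
    refine Summable.of_nonneg_of_le (ht_nonneg i j) (fun z => ?_)
      ((poissonK_summable (ϑ i.castSucc)).mul_right (g i.castSucc))
    rw [ht_eq]
    have h1 : 0 ≤ k i.castSucc z * g i.castSucc :=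
      (mul_pos (poissonK_pos (hpos _) z) (hg _)).le
    have h2 : (k j.castSucc z * g j.castSucc) / pf ϑ g z ≤ 1 :=
      (div_le_one (hp z)).mpr (poissonK_mul_le_pf ϑ g hpos hg _ z)
    calc k i.castSucc z * g i.castSucc * ((k j.castSucc z * g j.castSucc) / pf ϑ g z)
        ≤ k i.castSucc z * g i.castSucc * 1 := by
          exact mul_le_mul_of_nonneg_left h2 h1
      _ = k i.castSucc z * g i.castSucc := mul_one _
  rw [Matrix.posDef_iff_dotProduct_mulVec]
  constructor
  · -- Hermitian
    rw [Matrix.IsHermitian]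
    ext i j
    simp only [Matrix.conjTranspose_apply, Matrix.of_apply, star_trivial]
    congr 1
    · exact tsum_congr fun z => by ring
    · ring
  · intro x hx
    -- the weighted kernel combination and its mean
    set F : ℕ → ℝ := fun z => ∑ i : Fin m, x i * (k i.castSucc z * g i.castSucc) with hF
    set c : ℝ := ∑ i : Fin m, x i * g i.castSucc with hc
    have hFsum : Summable F :=
      summable_sum fun i _ => (((poissonK_summable _).mul_right _).mul_left (x i))
    have hFtsum : ∑' z, F z = c := by
      rw [hF, Summable.tsum_finsetSum fun i _ => (((poissonK_summable _).mul_right _).mul_left (x i))]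
      refine Finset.sum_congr rfl fun i _ => ?_
      rw [tsum_mul_left]
      have : (fun z => k i.castSucc z * g i.castSucc) = fun z => poissonK (ϑ i.castSucc) z * g i.castSucc := rfl
      rw [show ∑' z, k i.castSucc z * g i.castSucc = (∑' z, k i.castSucc z) * g i.castSucc from tsum_mul_right,
        hk, poissonK_tsum, one_mul]
    -- pointwise bound |F z| ≤ C * pf z
    set C : ℝ := ∑ i : Fin m, |x i| with hC
    have hFbound : ∀ z, |F z| ≤ C * pf ϑ g z := by
      intro z
      calc |F z| ≤ ∑ i : Fin m, |x i * (k i.castSucc z * g i.castSucc)| :=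
            Finset.abs_sum_le_sum_abs _ _
        _ ≤ ∑ i : Fin m, |x i| * pf ϑ g z := by
            refine Finset.sum_le_sum fun i _ => ?_
            rw [abs_mul]
            refine mul_le_mul_of_nonneg_left ?_ (abs_nonneg _)
            rw [abs_of_nonneg (mul_pos (poissonK_pos (hpos _) z) (hg _)).le]
            exact poissonK_mul_le_pf ϑ g hpos hg _ z
        _ = C * pf ϑ g z := by rw [hC, Finset.sum_mul]
    -- summability of F^2 / p
    have hF2_nonneg : ∀ z, 0 ≤ F z ^ 2 / pf ϑ g z := fun z =>
      div_nonneg (sq_nonneg _) (hp z).le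
    have hF2sum : Summable (fun z => F z ^ 2 / pf ϑ g z) := by
      refine Summable.of_nonneg_of_le hF2_nonneg (fun z => ?_)
        (((pf_summable ϑ g).mul_left (C ^ 2)))
      rw [div_le_iff₀ (hp z)]
      have h1 : F z ^ 2 ≤ (C * pf ϑ g z) ^ 2 := by
        rw [← sq_abs (F z)]
        exact pow_le_pow_left₀ (abs_nonneg _) (hFbound z) 2
      calc F z ^ 2 ≤ (C * pf ϑ g z) ^ 2 := h1
        _ = C ^ 2 * pf ϑ g z * pf ϑ g z := by ring
    -- the quadratic form equals ∑' z, F z ^ 2 / pf z − c ^ 2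
    have hQ : dotProduct (star x)
        (Matrix.mulVec (Matrix.of fun i j : Fin m =>
          (∑' z : ℕ,
              (poissonK (ϑ i.castSucc) z * g i.castSucc / pf ϑ g z) *
                (poissonK (ϑ j.castSucc) z * g j.castSucc / pf ϑ g z) * pf ϑ g z)
            - g i.castSucc * g j.castSucc) x)
        = (∑' z, F z ^ 2 / pf ϑ g z) - c * c := by
      have expand : dotProduct (star x)
          (Matrix.mulVec (Matrix.of fun i j : Fin m =>
            (∑' z : ℕ, t i j z) - g i.castSucc * g j.castSucc) x)
          = (∑ i, ∑ j, x i * x j * (∑' z, t i j z)) - c * c := by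
        simp only [dotProduct, Matrix.mulVec, Matrix.of_apply, star_trivial,
          Pi.star_apply]
        rw [hc, Finset.sum_mul_sum]
        rw [← Finset.sum_sub_distrib]
        refine Finset.sum_congr rfl fun i _ => ?_
        rw [Finset.mul_sum, ← Finset.sum_sub_distrib]
        refine Finset.sum_congr rfl fun j _ => ?_
        ring
      have h1 : ∀ i j : Fin m, x i * x j * (∑' z, t i j z) = ∑' z, x i * x j * t i j z :=
        fun i j => tsum_mul_left.symm
      have h2 : (∑ i, ∑ j, ∑' z, x i * x j * t i j z)
          = ∑' z, ∑ i, ∑ j : Fin m, x i * x j * t i j z := by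
        calc ∑ i, ∑ j, ∑' z, x i * x j * t i j z
            = ∑ i, ∑' z, ∑ j : Fin m, x i * x j * t i j z :=
              Finset.sum_congr rfl fun i _ =>
                (Summable.tsum_finsetSum fun j _ => ((ht_summable i j).mul_left _)).symm
          _ = ∑' z, ∑ i, ∑ j : Fin m, x i * x j * t i j z :=
              (Summable.tsum_finsetSum fun i _ => summable_sum fun j _ => ((ht_summable i j).mul_left _)).symm
      have h3 : ∀ z, (∑ i, ∑ j : Fin m, x i * x j * t i j z) = F z ^ 2 / pf ϑ g z := by
        intro z
        have hpz := (hp z).ne'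
        have e1 : ∀ i j : Fin m, x i * x j * t i j z =
            (x i * (k i.castSucc z * g i.castSucc)) *
              (x j * (k j.castSucc z * g j.castSucc)) * (pf ϑ g z)⁻¹ := by
          intro i j
          rw [ht_eq]
          field_simp
        calc ∑ i, ∑ j : Fin m, x i * x j * t i j z
            = ∑ i, ∑ j : Fin m, (x i * (k i.castSucc z * g i.castSucc)) *
                ((x j * (k j.castSucc z * g j.castSucc)) * (pf ϑ g z)⁻¹) := by
              refine Finset.sum_congr rfl fun i _ => Finset.sum_congr rfl fun j _ => ?_
              rw [e1]; ring
          _ = ∑ i, (x i * (k i.castSucc z * g i.castSucc)) *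
                (∑ j : Fin m, (x j * (k j.castSucc z * g j.castSucc)) * (pf ϑ g z)⁻¹) := by
              refine Finset.sum_congr rfl fun i _ => ?_
              rw [Finset.mul_sum]
          _ = F z * (F z * (pf ϑ g z)⁻¹) := by
              rw [← Finset.sum_mul, ← Finset.sum_mul, hF]
          _ = F z ^ 2 / pf ϑ g z := by
              rw [div_eq_mul_inv]; ring
        -- done
      rw [expand]
      congr 1
      calc (∑ i, ∑ j, x i * x j * (∑' z, t i j z))
          = ∑ i, ∑ j, ∑' z, x i * x j * t i j z := by
            exact Finset.sum_congr rfl fun i _ => Finset.sum_congr rfl fun j _ => h1 i j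
        _ = ∑' z, ∑ i, ∑ j : Fin m, x i * x j * t i j z := h2
        _ = ∑' z, F z ^ 2 / pf ϑ g z := tsum_congr h3
    rw [hQ]
    -- the quadratic form equals ∑' z, (F z − c pf z)^2 / pf z
    set G : ℕ → ℝ := fun z => (F z - c * pf ϑ g z) ^ 2 / pf ϑ g z with hG
    have hGdecomp : ∀ z, G z = F z ^ 2 / pf ϑ g z - 2 * c * F z + c ^ 2 * pf ϑ g z := by
      intro z
      have hpz := (hp z).ne'
      rw [hG]
      field_simp
      ring
    have hGnonneg : ∀ z, 0 ≤ G z := fun z => div_nonneg (sq_nonneg _) (hp z).le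
    have hGsum : Summable G := by
      have : G = fun z => F z ^ 2 / pf ϑ g z - 2 * c * F z + c ^ 2 * pf ϑ g z :=
        funext hGdecomp
      rw [this]
      exact ((hF2sum.sub ((hFsum.mul_left _))).add ((pf_summable ϑ g).mul_left _))
    have hGtsum : ∑' z, G z = (∑' z, F z ^ 2 / pf ϑ g z) - c * c := by
      have : G = fun z => F z ^ 2 / pf ϑ g z - 2 * c * F z + c ^ 2 * pf ϑ g z :=
        funext hGdecomp
      rw [this, Summable.tsum_add (hF2sum.sub ((hFsum.mul_left _))) ((pf_summable ϑ g).mul_left _),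
        Summable.tsum_sub hF2sum (hFsum.mul_left _), tsum_mul_left, tsum_mul_left, hFtsum,
        pf_tsum ϑ g hg1]
      ring
    rw [← hGtsum]
    -- find z₀ with F z₀ ≠ c * pf z₀
    have hexists : ∃ z₀, F z₀ ≠ c * pf ϑ g z₀ := by
      by_contra hcon
      push_neg at hcon
      -- build the coefficient vector
      set b : Fin (m + 1) → ℝ :=
        Fin.snoc (fun i : Fin m => (x i - c) * g i.castSucc) (-c * g (Fin.last m)) with hb
      have hbzero : ∀ z : ℕ, ∑ j, b j * poissonK (ϑ j) z = 0 := by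
        intro z
        have hsum : ∑ j, b j * poissonK (ϑ j) z = F z - c * pf ϑ g z := by
          rw [Fin.sum_univ_castSucc]
          simp only [hb, Fin.snoc_castSucc, Fin.snoc_last, hF, hk, pf]
          rw [Fin.sum_univ_castSucc (f := fun j => poissonK (ϑ j) z * g j)]
          have e : ∑ i : Fin m, (x i - c) * g i.castSucc * poissonK (ϑ i.castSucc) z
              = (∑ i : Fin m, x i * (poissonK (ϑ i.castSucc) z * g i.castSucc))
                - c * ∑ i : Fin m, poissonK (ϑ i.castSucc) z * g i.castSucc := by
            rw [Finset.mul_sum, ← Finset.sum_sub_distrib]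
            exact Finset.sum_congr rfl fun i _ => by ring
          rw [e]
          ring
        rw [hsum, hcon z, sub_self]
      -- Vandermonde: all coefficients vanish
      set b' : Fin (m + 1) → ℝ := fun j => b j * Real.exp (-(ϑ j)) with hb'
      have hb'zero : b' = 0 := by
        apply Matrix.eq_zero_of_forall_pow_sum_mul_pow_eq_zero hmono.injective
        intro i
        have hz := hbzero (i : ℕ)
        have hfac : ((Nat.factorial (i : ℕ) : ℝ)) ≠ 0 := by
          exact_mod_cast (Nat.factorial_pos _).ne'
        have : ∑ j, b' j * ϑ j ^ (i : ℕ) =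
            (∑ j, b j * poissonK (ϑ j) (i : ℕ)) * (Nat.factorial (i : ℕ) : ℝ) := by
          rw [Finset.sum_mul]
          refine Finset.sum_congr rfl fun j _ => ?_
          rw [hb']
          unfold poissonK
          field_simp
        rw [this, hz, zero_mul]
      have hbzero' : ∀ j, b j = 0 := by
        intro j
        have := congrFun hb'zero j
        simp only [hb', Pi.zero_apply] at this
        exact (mul_eq_zero.mp this).resolve_right (Real.exp_ne_zero _)
      have hc0 : c = 0 := by
        have := hbzero' (Fin.last m)
        simp only [hb, Fin.snoc_last] at this
        have := mul_eq_zero.mp this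
        rcases this with h | h
        · linarith [neg_eq_zero.mp h]
        · exact absurd h (hg _).ne'
      have hx0 : x = 0 := by
        funext i
        have := hbzero' i.castSucc
        simp only [hb, Fin.snoc_castSucc] at this
        rcases mul_eq_zero.mp this with h | h
        · have := sub_eq_zero.mp h
          simp [this, hc0]
        · exact absurd h (hg _).ne'
      exact hx hx0
    obtain ⟨z₀, hz₀⟩ := hexists
    have hGz₀ : 0 < G z₀ := by
      rw [hG]
      apply div_pos _ (hp z₀)
      have hne : F z₀ - c * pf ϑ g z₀ ≠ 0 := sub_ne_zero.mpr hz₀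
      exact lt_of_le_of_ne (sq_nonneg _) (Ne.symm (pow_ne_zero 2 hne))
    exact Summable.tsum_pos hGsum hGnonneg z₀ hGz₀
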